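/- If A' crosses a domain from right to left, i.e., given domains D (with times t0 ≤ t1 and boundary functions L, R : [t0,t1] → ℤ with L ≤ R) and D' (with times t0' ≤ t1' and boundary functions L', R'), satisfying t0 ≤ t0' ≤ t1 ≤ t1', R(t0') ≤ L'(t0'), and R'(t1) ≤ L(t1), then the grafting D'' defined by L''(t) = L(t) for t ∈ [t0,t0'], L''(t) = min(L(t),L'(t)) for t ∈ (t0',t1), L''(t) = L'(t) for t ∈ [t1,t1'], and R''(t) = R(t) for t ∈ [t0,t0'), R''(t) = max(R(t),R'(t)) for t ∈ [t0',t1], R''(t) = R'(t) for t ∈ (t1,t1'], is again a domain, i.e., L''(t) ≤ R''(t) for all t ∈ (t0,t1']. -/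
import Mathlib

/-- Grafting of domains: if `D'` crosses `D` from right to left, the grafted
boundary functions `L''`, `R''` satisfy `L'' ≤ R''` on `(t0, t1']`,
so the grafting is again a domain. -/
theorem grafting_is_domain
    (t0 t1 t0' t1' : ℝ) (L R L' R' L'' R'' : ℝ → ℤ)
    (hord : t0 ≤ t0' ∧ t0' ≤ t1 ∧ t1 ≤ t1')
    (hD : ∀ t, t0 < t → t ≤ t1 → L t ≤ R t)
    (hD' : ∀ t, t0' < t → t ≤ t1' → L' t ≤ R' t)
    (hcross1 : R t0' ≤ L' t0')
    (hcross2 : R' t1 ≤ L t1)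
    (hL''1 : ∀ t, t0 ≤ t → t ≤ t0' → L'' t = L t)
    (hL''2 : ∀ t, t0' < t → t < t1 → L'' t = min (L t) (L' t))
    (hL''3 : ∀ t, t1 ≤ t → t ≤ t1' → L'' t = L' t)
    (hR''1 : ∀ t, t0 ≤ t → t < t0' → R'' t = R t)
    (hR''2 : ∀ t, t0' ≤ t → t ≤ t1 → R'' t = max (R t) (R' t))
    (hR''3 : ∀ t, t1 < t → t ≤ t1' → R'' t = R' t) :
    ∀ t, t0 < t → t ≤ t1' → L'' t ≤ R'' t := by
  obtain ⟨h01, h12, h23⟩ := hord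
  intro t ht0 ht1'
  rcases lt_trichotomy t t0' with h | h | h
  · rw [hL''1 t ht0.le h.le, hR''1 t ht0.le h]
    exact hD t ht0 (h.le.trans h12)
  · subst h
    rw [hL''1 t ht0.le le_rfl, hR''2 t le_rfl h12]
    exact (hD t ht0 h12).trans (le_max_left _ _)
  · rcases lt_trichotomy t t1 with h2 | h2 | h2
    · rw [hL''2 t h h2, hR''2 t h.le h2.le]
      exact (min_le_left _ _).trans ((hD t ht0 h2.le).trans (le_max_left _ _))
    · subst h2
      rw [hL''3 t le_rfl h23, hR''2 t h.le le_rfl]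
      exact (hD' t h ht1').trans (le_max_right _ _)
    · rw [hL''3 t h2.le ht1', hR''3 t h2 ht1']
      exact hD' t (h12.trans_lt h2) ht1'
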